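/- Assume b = 0, a > 0 and c > (a·q₂)^(α₂/α₁)·a·q₁, where q₁ = sin(α₁π/2)/sin((α₁+α₂)π/2), q₂ = sin(α₂π/2)/sin((α₁+α₂)π/2). Then the unique positive root ω₀ of h₂(ω) = 0 is ω₀ = (a·q₂)^(1/α₁), and h₁(ω₀) = c - (a·q₂)^(α₂/α₁)·a·q₁ > 0. -/

import Mathlib

theorem stmt_9 (α₁ α₂ a c q₁ q₂ : ℝ) (hα₁ : 0 < α₁) (hα₁₂ : α₁ < α₂) (hα₂ : α₂ ≤ 1)
    (hq₁ : q₁ = Real.sin (α₁ * Real.pi / 2) / Real.sin ((α₁ + α₂) * Real.pi / 2))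
    (hq₂ : q₂ = Real.sin (α₂ * Real.pi / 2) / Real.sin ((α₁ + α₂) * Real.pi / 2))
    (ha : 0 < a) (hc : c > (a * q₂) ^ (α₂ / α₁) * a * q₁) :
    (∀ ω : ℝ, 0 < ω →
        (ω ^ (α₁ + α₂) * Real.sin ((α₁ + α₂) * Real.pi / 2)
            - a * ω ^ α₂ * Real.sin (α₂ * Real.pi / 2) = 0
          ↔ ω = (a * q₂) ^ (1 / α₁))) ∧
    ((a * q₂) ^ (1 / α₁)) ^ (α₁ + α₂) * Real.cos ((α₁ + α₂) * Real.pi / 2)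
        - a * ((a * q₂) ^ (1 / α₁)) ^ α₂ * Real.cos (α₂ * Real.pi / 2) + c
      = c - (a * q₂) ^ (α₂ / α₁) * a * q₁ ∧
    0 < c - (a * q₂) ^ (α₂ / α₁) * a * q₁ := by
  have hπ := Real.pi_pos
  have hα₂0 : 0 < α₂ := hα₁.trans hα₁₂
  have hs : 0 < Real.sin ((α₁ + α₂) * Real.pi / 2) := by
    apply Real.sin_pos_of_pos_of_lt_pi
    · positivity
    · nlinarith
  have hs₂ : 0 < Real.sin (α₂ * Real.pi / 2) := by
    apply Real.sin_pos_of_pos_of_lt_pi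
    · positivity
    · nlinarith
  have hs₁ : 0 < Real.sin (α₁ * Real.pi / 2) := by
    apply Real.sin_pos_of_pos_of_lt_pi
    · positivity
    · nlinarith
  have hq₂pos : 0 < q₂ := by rw [hq₂]; positivity
  have haq : 0 < a * q₂ := by positivity
  have hα₁ne : α₁ ≠ 0 := ne_of_gt hα₁
  have hq₂s : q₂ * Real.sin ((α₁ + α₂) * Real.pi / 2) = Real.sin (α₂ * Real.pi / 2) := by
    rw [hq₂]; exact div_mul_cancel₀ _ hs.ne'
  have htrig : Real.sin (α₂ * Real.pi / 2) * Real.cos ((α₁ + α₂) * Real.pi / 2)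
      - Real.cos (α₂ * Real.pi / 2) * Real.sin ((α₁ + α₂) * Real.pi / 2)
      = -Real.sin (α₁ * Real.pi / 2) := by
    have h := Real.sin_sub (α₂ * Real.pi / 2) ((α₁ + α₂) * Real.pi / 2)
    have h2 : α₂ * Real.pi / 2 - (α₁ + α₂) * Real.pi / 2 = -(α₁ * Real.pi / 2) := by ring
    rw [h2, Real.sin_neg] at h
    linarith
  refine ⟨?_, ?_, by linarith⟩
  · intro ω hω
    have hωα₂ : 0 < ω ^ α₂ := Real.rpow_pos_of_pos hω _
    have hrw : ω ^ (α₁ + α₂) = ω ^ α₁ * ω ^ α₂ := Real.rpow_add hω _ _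
    constructor
    · intro h
      rw [hrw] at h
      have h2 : ω ^ α₂ * (ω ^ α₁ * Real.sin ((α₁ + α₂) * Real.pi / 2)
          - a * Real.sin (α₂ * Real.pi / 2)) = 0 := by linear_combination h
      have h3 : ω ^ α₁ * Real.sin ((α₁ + α₂) * Real.pi / 2)
          - a * Real.sin (α₂ * Real.pi / 2) = 0 := by
        rcases mul_eq_zero.1 h2 with h' | h'
        · exact absurd h' (ne_of_gt hωα₂)
        · exact h'
      have h4 : ω ^ α₁ = a * q₂ := by
        rw [hq₂, ← mul_div_assoc, eq_div_iff hs.ne']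
        linarith
      rw [← h4, one_div, Real.rpow_rpow_inv hω.le hα₁ne]
    · intro h
      have h4 : ω ^ α₁ = a * q₂ := by
        rw [h, one_div, Real.rpow_inv_rpow haq.le hα₁ne]
      rw [hrw]
      linear_combination (ω ^ α₂ * Real.sin ((α₁ + α₂) * Real.pi / 2)) * h4
        + (a * ω ^ α₂) * hq₂s
  · have h1 : ((a * q₂) ^ (1 / α₁)) ^ α₂ = (a * q₂) ^ (α₂ / α₁) := by
      rw [← Real.rpow_mul haq.le]
      congr 1
      field_simp
    have h2 : ((a * q₂) ^ (1 / α₁)) ^ (α₁ + α₂) = (a * q₂) * (a * q₂) ^ (α₂ / α₁) := by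
      rw [← Real.rpow_mul haq.le]
      have h3 : 1 / α₁ * (α₁ + α₂) = 1 + α₂ / α₁ := by field_simp
      rw [h3, Real.rpow_add haq, Real.rpow_one]
    have key : q₂ * Real.cos ((α₁ + α₂) * Real.pi / 2) - Real.cos (α₂ * Real.pi / 2) = -q₁ := by
      rw [hq₁, hq₂]
      rw [eq_neg_iff_add_eq_zero, div_mul_eq_mul_div, div_sub' hs.ne', ← add_div,
        div_eq_zero_iff]
      left
      linear_combination htrig
    rw [h1, h2]
    linear_combination (a * (a * q₂) ^ (α₂ / α₁)) * key
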